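/- Pointwise multiplication of temporal K-elements is associative: for all temporal K-elements k, k', k'' we have (k ·_P k') ·_P k'' = k ·_P (k' ·_P k''). -/
import Mathlib


open scoped Classical

namespace TemporalK

variable {K : Type*}

/-- An interval over the time domain `{0, ..., N-1}`: a pair `(b, e)` with `b < e ≤ N`. -/
abbrev TInterval (N : ℕ) := {I : Fin (N + 1) × Fin (N + 1) // I.1 < I.2}

/-- A temporal `K`-element: a function assigning to each interval an element of `K`. -/
abbrev TempEl (N : ℕ) (K : Type*) := TInterval N → K

/-- The interval `I = (b, e)` contains the time point `T` iff `b ≤ T < e`. -/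
def Contains {N : ℕ} (I : TInterval N) (T : ℕ) : Prop :=
  (I.val.1 : ℕ) ≤ T ∧ T < (I.val.2 : ℕ)

/-- The timeslice of `𝒯` at time point `T`: the sum of `𝒯 I` over all intervals `I`
containing `T`. -/
noncomputable def slice {N : ℕ} [CommSemiring K] (𝒯 : TempEl N K) (T : ℕ) : K :=
  ∑ I ∈ Finset.univ.filter (fun I : TInterval N => Contains I T), 𝒯 I

/-- `T` is an (annotation) changepoint of `𝒯` iff `T = 0` or the timeslices at `T - 1`
and `T` differ. -/
def Changepoint {N : ℕ} [CommSemiring K] (𝒯 : TempEl N K) (T : ℕ) : Prop :=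
  T = 0 ∨ slice 𝒯 (T - 1) ≠ slice 𝒯 T

/-- `I = (b, e)` is a changepoint interval of `𝒯` iff `b` is a changepoint, `e` is a
changepoint or equals `N`, and no time point strictly between `b` and `e` is a changepoint. -/
def CPInterval {N : ℕ} [CommSemiring K] (𝒯 : TempEl N K) (I : TInterval N) : Prop :=
  Changepoint 𝒯 (I.val.1 : ℕ) ∧
    (Changepoint 𝒯 (I.val.2 : ℕ) ∨ (I.val.2 : ℕ) = N) ∧
    ∀ T : ℕ, (I.val.1 : ℕ) < T → T < (I.val.2 : ℕ) → ¬ Changepoint 𝒯 T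

/-- `K`-coalescing: maps changepoint intervals `(b, e)` to the timeslice at `b` and all
other intervals to `0`. -/
noncomputable def coal {N : ℕ} [CommSemiring K] (𝒯 : TempEl N K) : TempEl N K :=
  fun I => if CPInterval 𝒯 I then slice 𝒯 (I.val.1 : ℕ) else 0

/-- Snapshot equivalence: equal timeslices at every time point. -/
def SnapEq {N : ℕ} [CommSemiring K] (k k' : TempEl N K) : Prop :=
  ∀ T : ℕ, T < N → slice k T = slice k' T

/-- A temporal `K`-element is coalesced iff it is the `K`-coalescing of some
temporal `K`-element. -/
def Coalesced {N : ℕ} [CommSemiring K] (k : TempEl N K) : Prop :=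
  ∃ 𝒯 : TempEl N K, k = coal 𝒯

/-- Pointwise addition of temporal `K`-elements. -/
def padd {N : ℕ} [CommSemiring K] (k k' : TempEl N K) : TempEl N K :=
  fun I => k I + k' I

/-- Pointwise multiplication of temporal `K`-elements:
`(k ·_P k')(I) = Σ k(I')·k'(I'')` over all pairs `(I', I'')` whose intersection is
nonempty and equals `I`. -/
noncomputable def pmul {N : ℕ} [CommSemiring K] (k k' : TempEl N K) : TempEl N K :=
  fun I =>
    ∑ p ∈ Finset.univ.filter (fun p : TInterval N × TInterval N =>
        max (p.1.val.1 : ℕ) (p.2.val.1 : ℕ) < min (p.1.val.2 : ℕ) (p.2.val.2 : ℕ) ∧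
        (I.val.1 : ℕ) = max (p.1.val.1 : ℕ) (p.2.val.1 : ℕ) ∧
        (I.val.2 : ℕ) = min (p.1.val.2 : ℕ) (p.2.val.2 : ℕ)),
      k p.1 * k' p.2

/-- Addition of the period semiring: coalesced pointwise addition. -/
noncomputable def tadd {N : ℕ} [CommSemiring K] (k k' : TempEl N K) : TempEl N K :=
  coal (padd k k')

/-- Multiplication of the period semiring: coalesced pointwise multiplication. -/
noncomputable def tmul {N : ℕ} [CommSemiring K] (k k' : TempEl N K) : TempEl N K :=
  coal (pmul k k')

/-- The zero of the period semiring: maps every interval to `0`. -/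
def zeroT (N : ℕ) (K : Type*) [CommSemiring K] : TempEl N K := fun _ => 0

/-- The one of the period semiring: maps the interval `(0, N)` to `1` and every other
interval to `0`. -/
def oneT (N : ℕ) (K : Type*) [CommSemiring K] : TempEl N K :=
  fun I => if (I.val.1 : ℕ) = 0 ∧ (I.val.2 : ℕ) = N then 1 else 0

/-- Encoding of an annotation history `f : time points → K` as a coalesced temporal
`K`-element: coalesce the element assigning `f T` to each singleton interval `(T, T+1)`. -/
noncomputable def enc {N : ℕ} [CommSemiring K] (f : Fin N → K) : TempEl N K :=
  coal (fun I =>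
    if h : (I.val.2 : ℕ) = (I.val.1 : ℕ) + 1 then
      f ⟨(I.val.1 : ℕ), by have := I.val.2.isLt; omega⟩
    else 0)

/-- The natural preorder of the semiring `K`. -/
def nle [CommSemiring K] (a b : K) : Prop := ∃ c, a + c = b

/-- The natural preorder of the period semiring (on coalesced temporal `K`-elements). -/
def tle {N : ℕ} [CommSemiring K] (k k' : TempEl N K) : Prop :=
  ∃ k'' : TempEl N K, Coalesced k'' ∧ tadd k k'' = k'

/-- The pointwise monus: assigns `τ_T(k) −_K τ_T(k')` to each singleton interval
`(T, T+1)` and `0` to every non-singleton interval. -/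
noncomputable def pmonus {N : ℕ} [CommSemiring K] (monus : K → K → K)
    (k k' : TempEl N K) : TempEl N K :=
  fun I =>
    if (I.val.2 : ℕ) = (I.val.1 : ℕ) + 1 then
      monus (slice k (I.val.1 : ℕ)) (slice k' (I.val.1 : ℕ))
    else 0

/-- The monus of the period semiring: coalesced pointwise monus. -/
noncomputable def tmonus {N : ℕ} [CommSemiring K] (monus : K → K → K)
    (k k' : TempEl N K) : TempEl N K :=
  coal (pmonus monus k k')

end TemporalK

open TemporalK

section Aux

open TemporalK

lemma TInterval.ext'' {N : ℕ} {I J : TInterval N}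
    (h1 : (I.val.1 : ℕ) = (J.val.1 : ℕ)) (h2 : (I.val.2 : ℕ) = (J.val.2 : ℕ)) : I = J :=
  Subtype.ext (Prod.ext (Fin.ext h1) (Fin.ext h2))

lemma expandL {N : ℕ} {K : Type*} [CommSemiring K] (k k' k'' : TempEl N K)
    (I : TInterval N) :
    pmul (pmul k k') k'' I =
      ∑ t ∈ Finset.univ.filter (fun t : TInterval N × TInterval N × TInterval N =>
        max (max (t.1.val.1 : ℕ) (t.2.1.val.1 : ℕ)) (t.2.2.val.1 : ℕ) <
          min (min (t.1.val.2 : ℕ) (t.2.1.val.2 : ℕ)) (t.2.2.val.2 : ℕ) ∧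
        (I.val.1 : ℕ) = max (max (t.1.val.1 : ℕ) (t.2.1.val.1 : ℕ)) (t.2.2.val.1 : ℕ) ∧
        (I.val.2 : ℕ) = min (min (t.1.val.2 : ℕ) (t.2.1.val.2 : ℕ)) (t.2.2.val.2 : ℕ)),
        k t.1 * k' t.2.1 * k'' t.2.2 := by
  unfold pmul
  simp_rw [Finset.sum_mul]
  rw [Finset.sum_sigma']
  refine Finset.sum_bij' (fun a _ => (a.2.1, a.2.2, a.1.2))
    (fun t ht => ⟨(⟨(⟨max (t.1.val.1 : ℕ) (t.2.1.val.1 : ℕ), by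
        have := t.1.val.1.isLt; have := t.2.1.val.1.isLt; omega⟩,
      ⟨min (t.1.val.2 : ℕ) (t.2.1.val.2 : ℕ), by
        have := t.1.val.2.isLt; have := t.2.1.val.2.isLt; omega⟩), by
      simp only [Finset.mem_filter, Finset.mem_univ, true_and] at ht
      exact Fin.mk_lt_mk.mpr (by omega)⟩,
      t.2.2), (t.1, t.2.1)⟩)
    ?_ ?_ ?_ ?_ ?_
  · rintro ⟨⟨q, c⟩, r⟩ ha
    simp only [Finset.mem_sigma, Finset.mem_filter, Finset.mem_univ, true_and] at ha ⊢
    omega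
  · rintro t ht
    simp only [Finset.mem_filter, Finset.mem_univ, true_and] at ht
    simp only [Finset.mem_sigma, Finset.mem_filter, Finset.mem_univ, true_and]
    exact ⟨ht, by omega, trivial⟩
  · rintro ⟨⟨q, c⟩, r⟩ ha
    simp only [Finset.mem_sigma, Finset.mem_filter, Finset.mem_univ, true_and] at ha
    obtain ⟨-, -, hq1, hq2⟩ := ha
    have hq : ∀ (J : TInterval N), (J.val.1 : ℕ) = (q.val.1 : ℕ) →
        (J.val.2 : ℕ) = (q.val.2 : ℕ) →
        (⟨(J, c), r⟩ : Σ _ : TInterval N × TInterval N, TInterval N × TInterval N)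
          = ⟨(q, c), r⟩ := by
      intro J h1 h2
      rw [TInterval.ext'' h1 h2]
    exact hq _ hq1.symm hq2.symm
  · rintro t ht
    rfl
  · rintro ⟨⟨q, c⟩, r⟩ ha
    rfl

lemma expandR {N : ℕ} {K : Type*} [CommSemiring K] (k k' k'' : TempEl N K)
    (I : TInterval N) :
    pmul k (pmul k' k'') I =
      ∑ t ∈ Finset.univ.filter (fun t : TInterval N × TInterval N × TInterval N =>
        max (t.1.val.1 : ℕ) (max (t.2.1.val.1 : ℕ) (t.2.2.val.1 : ℕ)) <
          min (t.1.val.2 : ℕ) (min (t.2.1.val.2 : ℕ) (t.2.2.val.2 : ℕ)) ∧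
        (I.val.1 : ℕ) = max (t.1.val.1 : ℕ) (max (t.2.1.val.1 : ℕ) (t.2.2.val.1 : ℕ)) ∧
        (I.val.2 : ℕ) = min (t.1.val.2 : ℕ) (min (t.2.1.val.2 : ℕ) (t.2.2.val.2 : ℕ))),
        k t.1 * (k' t.2.1 * k'' t.2.2) := by
  unfold pmul
  simp_rw [Finset.mul_sum]
  rw [Finset.sum_sigma']
  refine Finset.sum_bij' (fun a _ => (a.1.1, a.2.1, a.2.2))
    (fun t ht => ⟨(t.1, ⟨(⟨max (t.2.1.val.1 : ℕ) (t.2.2.val.1 : ℕ), by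
        have := t.2.1.val.1.isLt; have := t.2.2.val.1.isLt; omega⟩,
      ⟨min (t.2.1.val.2 : ℕ) (t.2.2.val.2 : ℕ), by
        have := t.2.1.val.2.isLt; have := t.2.2.val.2.isLt; omega⟩), by
      simp only [Finset.mem_filter, Finset.mem_univ, true_and] at ht
      exact Fin.mk_lt_mk.mpr (by omega)⟩),
      (t.2.1, t.2.2)⟩)
    ?_ ?_ ?_ ?_ ?_
  · rintro ⟨⟨c, q⟩, r⟩ ha
    simp only [Finset.mem_sigma, Finset.mem_filter, Finset.mem_univ, true_and] at ha ⊢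
    omega
  · rintro t ht
    simp only [Finset.mem_filter, Finset.mem_univ, true_and] at ht
    simp only [Finset.mem_sigma, Finset.mem_filter, Finset.mem_univ, true_and]
    exact ⟨ht, by omega, trivial⟩
  · rintro ⟨⟨c, q⟩, r⟩ ha
    simp only [Finset.mem_sigma, Finset.mem_filter, Finset.mem_univ, true_and] at ha
    obtain ⟨-, -, hq1, hq2⟩ := ha
    have hq : ∀ (J : TInterval N), (J.val.1 : ℕ) = (q.val.1 : ℕ) →
        (J.val.2 : ℕ) = (q.val.2 : ℕ) →
        (⟨(c, J), r⟩ : Σ _ : TInterval N × TInterval N, TInterval N × TInterval N)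
          = ⟨(c, q), r⟩ := by
      intro J h1 h2
      rw [TInterval.ext'' h1 h2]
    exact hq _ hq1.symm hq2.symm
  · rintro t ht
    rfl
  · rintro ⟨⟨c, q⟩, r⟩ ha
    rfl

end Aux


theorem pmul_assoc {N : ℕ} (hN : 1 ≤ N) {K : Type*} [CommSemiring K]
    (k k' k'' : TempEl N K) :
    pmul (pmul k k') k'' = pmul k (pmul k' k'') := by
  funext I
  rw [expandL, expandR]
  refine Finset.sum_congr ?_ fun t _ => mul_assoc _ _ _
  ext t
  simp only [Finset.mem_filter, Finset.mem_univ, true_and]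
  omega
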